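/- For any two continuously differentiable, bounded functions h₁, h₂ : ℝ → ℝ with integrable derivatives and with h₁(ε) = h₂(ε) for all ε in a neighborhood (μ - δ, μ + δ) of μ (δ > 0), the difference of the Sommerfeld integrals D(T) = ∫_{-∞}^{∞} (h₁(ε) - h₂(ε))·f_FD((ε-μ)/T) dε minus ∫_{-∞}^{μ}(h₁ - h₂) tends to 0 faster than any power of T as T → 0⁺: for every n, D(T) - ∫_{-∞}^{μ}(h₁(ε)-h₂(ε))dε = o(Tⁿ). -/

import Mathlib

open MeasureTheory Filter Asymptotics

noncomputable def fFD (x : ℝ) : ℝ := (Real.exp x + 1)⁻¹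

lemma fFD_pos (x : ℝ) : 0 < fFD x := by
  unfold fFD; positivity

lemma fFD_le_one (x : ℝ) : fFD x ≤ 1 := by
  unfold fFD
  rw [inv_le_one_iff₀]
  right
  nlinarith [Real.exp_pos x]

lemma fFD_le_exp_neg (x : ℝ) : fFD x ≤ Real.exp (-x) := by
  unfold fFD
  rw [Real.exp_neg]
  apply inv_anti₀ (Real.exp_pos x)
  linarith

lemma one_sub_fFD_le (x : ℝ) : 1 - fFD x ≤ Real.exp x := by
  unfold fFD
  have h : 0 < Real.exp x + 1 := by positivity
  have h2 : (Real.exp x + 1)⁻¹ = 1 - Real.exp x / (Real.exp x + 1) := by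
    field_simp
    ring
  rw [h2]
  have h3 : Real.exp x / (Real.exp x + 1) ≤ Real.exp x := by
    rw [div_le_iff₀ h]
    nlinarith [Real.exp_pos x]
  linarith

lemma fFD_anti : Antitone fFD := by
  intro x y hxy
  unfold fFD
  apply inv_anti₀ (by positivity)
  have := Real.exp_le_exp.mpr hxy
  linarith

lemma fFD_continuous : Continuous fFD := by
  apply (Real.continuous_exp.add continuous_const).inv₀
  intro x
  exact (add_pos (Real.exp_pos x) one_pos).ne'

theorem sommerfeld_local_insensitivity
    (h₁ h₂ : ℝ → ℝ) (μ δ : ℝ) (hδ : 0 < δ)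
    (hC1₁ : ContDiff ℝ 1 h₁) (hC1₂ : ContDiff ℝ 1 h₂)
    (hb₁ : ∃ C : ℝ, ∀ x, |h₁ x| ≤ C) (hb₂ : ∃ C : ℝ, ∀ x, |h₂ x| ≤ C)
    (hd₁ : Integrable (deriv h₁)) (hd₂ : Integrable (deriv h₂))
    (heq : ∀ ε ∈ Set.Ioo (μ - δ) (μ + δ), h₁ ε = h₂ ε) :
    ∀ n : ℕ,
      (fun T : ℝ =>
          (∫ ε : ℝ, (h₁ ε - h₂ ε) * fFD ((ε - μ) / T)) -
            ∫ ε in Set.Iio μ, (h₁ ε - h₂ ε))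
        =o[nhdsWithin 0 (Set.Ioi 0)] fun T : ℝ => T ^ n := by
  intro n
  obtain ⟨C₁, hC₁⟩ := hb₁
  obtain ⟨C₂, hC₂⟩ := hb₂
  set M : ℝ := C₁ + C₂ with hMdef
  have hM : ∀ x, |h₁ x - h₂ x| ≤ M := fun x =>
    (abs_sub _ _).trans (add_le_add (hC₁ x) (hC₂ x))
  have hgc : Continuous (fun ε => h₁ ε - h₂ ε) :=
    (hC1₁.continuous).sub (hC1₂.continuous)
  have hg0 : ∀ ε ∈ Set.Ioo (μ - δ) (μ + δ), h₁ ε - h₂ ε = 0 := fun ε hε => by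
    rw [heq ε hε]; ring
  by_cases hint : IntegrableOn (fun ε => h₁ ε - h₂ ε) (Set.Iio μ) volume
  · -- main case: g is integrable on Iio μ
    set A : ℝ := ∫ ε in Set.Iio μ, ‖h₁ ε - h₂ ε‖ with hAdef
    set B : ℝ := ∫ ε in Set.Ici μ, Real.exp (-(ε - μ)/2) with hBdef
    have hM0 : 0 ≤ M := (abs_nonneg _).trans (hM μ)
    have hBint : IntegrableOn (fun ε : ℝ => Real.exp (-(ε - μ)/2)) (Set.Ici μ) := by
      have heqf : (fun ε : ℝ => Real.exp (-(ε - μ)/2))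
          = fun ε : ℝ => Real.exp (μ/2) * Real.exp (-(2⁻¹ : ℝ) * ε) := by
        funext ε
        rw [← Real.exp_add]
        ring_nf
      rw [heqf, integrableOn_Ici_iff_integrableOn_Ioi]
      exact (exp_neg_integrableOn_Ioi μ (by norm_num)).const_mul _
    -- the key quantitative bound
    have key : ∀ T : ℝ, 0 < T → T ≤ 1 →
        ‖(∫ ε : ℝ, (h₁ ε - h₂ ε) * fFD ((ε - μ) / T)) -
            ∫ ε in Set.Iio μ, (h₁ ε - h₂ ε)‖
          ≤ (A + M * B) * Real.exp (-(δ/2)/T) := by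
      intro T hT hT1
      have hE : (0:ℝ) < Real.exp (-(δ/2)/T) := Real.exp_pos _
      have hcontT : Continuous (fun ε : ℝ => (h₁ ε - h₂ ε) * fFD ((ε - μ)/T)) :=
        hgc.mul (fFD_continuous.comp ((continuous_id.sub continuous_const).div_const T))
      have hbound2 : ∀ ε ∈ Set.Ici μ, ‖(h₁ ε - h₂ ε) * fFD ((ε - μ)/T)‖
          ≤ (M * Real.exp (-(δ/2)/T)) * Real.exp (-(ε - μ)/2) := by
        intro ε hε
        have hε : μ ≤ ε := hε
        rcases lt_or_ge ε (μ + δ) with h' | h'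
        · rw [hg0 ε ⟨by linarith, h'⟩, zero_mul, norm_zero]
          exact mul_nonneg (mul_nonneg hM0 hE.le) (Real.exp_pos _).le
        · have hs : δ ≤ ε - μ := by linarith
          have hf1 : fFD ((ε - μ)/T) ≤ Real.exp (-((ε - μ)/T)) := fFD_le_exp_neg _
          have hexp : Real.exp (-((ε - μ)/T))
              ≤ Real.exp (-(δ/2)/T) * Real.exp (-(ε - μ)/2) := by
            rw [← Real.exp_add]
            apply Real.exp_le_exp.mpr
            rw [neg_div, neg_div, ← neg_add, neg_le_neg_iff,
              div_add_div _ _ hT.ne' (two_ne_zero),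
              div_le_div_iff₀ (by positivity) hT]
            nlinarith [mul_nonneg hT.le (sub_nonneg.mpr hs),
              mul_nonneg (mul_nonneg hT.le (by linarith : (0:ℝ) ≤ ε - μ))
                (by linarith : (0:ℝ) ≤ 1 - T)]
          rw [norm_mul, Real.norm_eq_abs, Real.norm_eq_abs,
            abs_of_pos (fFD_pos _), mul_assoc]
          exact mul_le_mul (hM ε) (hf1.trans hexp) (fFD_pos _).le hM0
      have hInt2 : IntegrableOn
          (fun ε : ℝ => (h₁ ε - h₂ ε) * fFD ((ε - μ)/T)) (Set.Ici μ) := by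
        apply Integrable.mono' ((hBint.const_mul (M * Real.exp (-(δ/2)/T))))
          hcontT.aestronglyMeasurable.restrict
        rw [ae_restrict_iff' measurableSet_Ici]
        exact Filter.Eventually.of_forall hbound2
      have hInt1 : IntegrableOn
          (fun ε : ℝ => (h₁ ε - h₂ ε) * fFD ((ε - μ)/T)) (Set.Iio μ) := by
        apply Integrable.mono' hint.norm hcontT.aestronglyMeasurable.restrict
        refine Filter.Eventually.of_forall (fun ε => ?_)
        rw [norm_mul, Real.norm_eq_abs (fFD _), abs_of_pos (fFD_pos _)]
        nlinarith [fFD_le_one ((ε - μ)/T), fFD_pos ((ε - μ)/T), norm_nonneg (h₁ ε - h₂ ε)]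
      have hsplit : (∫ ε : ℝ, (h₁ ε - h₂ ε) * fFD ((ε - μ) / T))
          = (∫ ε in Set.Iio μ, (h₁ ε - h₂ ε) * fFD ((ε - μ) / T))
            + ∫ ε in Set.Ici μ, (h₁ ε - h₂ ε) * fFD ((ε - μ) / T) :=
        (intervalIntegral.integral_Iio_add_Ici hInt1 hInt2).symm
      have hterm1 : (∫ ε in Set.Iio μ, (h₁ ε - h₂ ε) * fFD ((ε - μ) / T))
            - (∫ ε in Set.Iio μ, (h₁ ε - h₂ ε))
          = ∫ ε in Set.Iio μ,
              ((h₁ ε - h₂ ε) * fFD ((ε - μ) / T) - (h₁ ε - h₂ ε)) :=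
        (integral_sub hInt1 hint).symm
      have hb1 : ‖∫ ε in Set.Iio μ,
            ((h₁ ε - h₂ ε) * fFD ((ε - μ) / T) - (h₁ ε - h₂ ε))‖
          ≤ A * Real.exp (-(δ/2)/T) := by
        have hmaj : Integrable (fun ε : ℝ => ‖h₁ ε - h₂ ε‖ * Real.exp (-(δ/2)/T))
            (volume.restrict (Set.Iio μ)) := hint.norm.mul_const _
        have hptw : ∀ᵐ x ∂(volume.restrict (Set.Iio μ)),
            ‖(h₁ x - h₂ x) * fFD ((x - μ) / T) - (h₁ x - h₂ x)‖
              ≤ ‖h₁ x - h₂ x‖ * Real.exp (-(δ/2)/T) := by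
          rw [ae_restrict_iff' measurableSet_Iio]
          refine Filter.Eventually.of_forall (fun ε hε => ?_)
          have hε : ε < μ := hε
          rcases lt_or_ge (μ - δ) ε with h' | h'
          · rw [hg0 ε ⟨h', by linarith⟩]
            simp [hE.le]
          · have hf1 : 1 - fFD ((ε - μ)/T) ≤ Real.exp (-(δ/2)/T) := by
              refine (one_sub_fFD_le _).trans (Real.exp_le_exp.mpr ?_)
              apply div_le_div_of_nonneg_right ?_ hT.le
              linarith
            have hfle := fFD_le_one ((ε - μ)/T)
            have hfpos := fFD_pos ((ε - μ)/T)
            have : (h₁ ε - h₂ ε) * fFD ((ε - μ) / T) - (h₁ ε - h₂ ε)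
                = (h₁ ε - h₂ ε) * (fFD ((ε - μ) / T) - 1) := by ring
            rw [this, norm_mul, Real.norm_eq_abs (fFD _ - 1),
              abs_of_nonpos (by linarith)]
            have h2 : 0 ≤ ‖h₁ ε - h₂ ε‖ := norm_nonneg _
            nlinarith
        calc ‖∫ ε in Set.Iio μ,
              ((h₁ ε - h₂ ε) * fFD ((ε - μ) / T) - (h₁ ε - h₂ ε))‖
            ≤ ∫ ε in Set.Iio μ, ‖h₁ ε - h₂ ε‖ * Real.exp (-(δ/2)/T) :=
              norm_integral_le_of_norm_le hmaj hptw
          _ = A * Real.exp (-(δ/2)/T) := integral_mul_const _ _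
      have hb2 : ‖∫ ε in Set.Ici μ, (h₁ ε - h₂ ε) * fFD ((ε - μ) / T)‖
          ≤ M * Real.exp (-(δ/2)/T) * B := by
        have hptw : ∀ᵐ x ∂(volume.restrict (Set.Ici μ)),
            ‖(h₁ x - h₂ x) * fFD ((x - μ) / T)‖
              ≤ (M * Real.exp (-(δ/2)/T)) * Real.exp (-(x - μ)/2) := by
          rw [ae_restrict_iff' measurableSet_Ici]
          exact Filter.Eventually.of_forall hbound2
        calc ‖∫ ε in Set.Ici μ, (h₁ ε - h₂ ε) * fFD ((ε - μ) / T)‖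
            ≤ ∫ ε in Set.Ici μ,
                (M * Real.exp (-(δ/2)/T)) * Real.exp (-(ε - μ)/2) :=
              norm_integral_le_of_norm_le
                (hBint.const_mul (M * Real.exp (-(δ/2)/T))) hptw
          _ = M * Real.exp (-(δ/2)/T) * B := integral_const_mul _ _
      calc ‖(∫ ε : ℝ, (h₁ ε - h₂ ε) * fFD ((ε - μ) / T)) -
            ∫ ε in Set.Iio μ, (h₁ ε - h₂ ε)‖
          = ‖(∫ ε in Set.Iio μ,
                ((h₁ ε - h₂ ε) * fFD ((ε - μ) / T) - (h₁ ε - h₂ ε)))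
              + ∫ ε in Set.Ici μ, (h₁ ε - h₂ ε) * fFD ((ε - μ) / T)‖ := by
            rw [hsplit, ← hterm1]
            congr 1
            ring
        _ ≤ _ + _ := norm_add_le _ _
        _ ≤ A * Real.exp (-(δ/2)/T) + M * Real.exp (-(δ/2)/T) * B :=
            add_le_add hb1 hb2
        _ = (A + M * B) * Real.exp (-(δ/2)/T) := by ring
    -- now the asymptotic part
    have hO : (fun T : ℝ =>
          (∫ ε : ℝ, (h₁ ε - h₂ ε) * fFD ((ε - μ) / T)) -
            ∫ ε in Set.Iio μ, (h₁ ε - h₂ ε))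
        =O[nhdsWithin 0 (Set.Ioi 0)] fun T : ℝ => Real.exp (-(δ/2)/T) := by
      rw [isBigO_iff]
      refine ⟨A + M * B, ?_⟩
      filter_upwards [Ioc_mem_nhdsGT_of_mem (by constructor <;> norm_num :
        (0:ℝ) ∈ Set.Ico (0:ℝ) 1)] with T hT
      simpa [Real.norm_eq_abs, abs_of_pos (Real.exp_pos _)] using key T hT.1 hT.2
    refine hO.trans_isLittleO ?_
    rw [isLittleO_iff_tendsto']
    · have hc : (0:ℝ) < δ/2 := by linarith
      have h1 : Tendsto (fun T : ℝ => (δ/2) / T) (nhdsWithin 0 (Set.Ioi 0)) atTop := by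
        have := tendsto_inv_nhdsGT_zero.const_mul_atTop hc
        simpa [div_eq_mul_inv] using this
      have h2 := (Real.tendsto_pow_mul_exp_neg_atTop_nhds_zero n).comp h1
      have h3 := h2.const_mul ((δ/2) ^ n)⁻¹
      rw [mul_zero] at h3
      apply h3.congr'
      filter_upwards [self_mem_nhdsWithin] with T hT
      have hT : (0:ℝ) < T := hT
      have hcn : ((δ/2) : ℝ) ^ n ≠ 0 := by positivity
      simp only [Function.comp]
      rw [div_pow, neg_div]
      field_simp
      ring_nf
      rw [mul_assoc (δ ^ n), ← mul_pow, mul_inv_cancel₀ hT.ne', one_pow, mul_one,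
        mul_assoc, ← mul_pow]
      norm_num
    · filter_upwards [self_mem_nhdsWithin] with T hT h
      exact absurd h (pow_ne_zero n (ne_of_gt hT))

  · -- the junk-value case: both integrals are 0
    have hzero : ∀ T ∈ Set.Ioi (0:ℝ),
        ((∫ ε : ℝ, (h₁ ε - h₂ ε) * fFD ((ε - μ) / T)) -
          ∫ ε in Set.Iio μ, (h₁ ε - h₂ ε)) = 0 := by
      intro T hT
      have hT : (0:ℝ) < T := hT
      have h2 : (∫ ε in Set.Iio μ, (h₁ ε - h₂ ε)) = 0 := integral_undef hint
      have h1 : ¬ Integrable (fun ε : ℝ => (h₁ ε - h₂ ε) * fFD ((ε - μ) / T)) := by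
        intro h
        apply hint
        set c : ℝ := fFD (-δ / T) with hcdef
        have hc : 0 < c := fFD_pos _
        have hI1 : IntegrableOn (fun ε => h₁ ε - h₂ ε) (Set.Iio (μ - δ)) := by
          apply Integrable.mono' ((h.norm.const_mul c⁻¹).restrict)
            (hgc.aestronglyMeasurable.restrict)
          rw [ae_restrict_iff' measurableSet_Iio]
          refine Filter.Eventually.of_forall (fun ε hε => ?_)
          have hε : ε < μ - δ := hε
          have hle : (ε - μ) / T ≤ -δ / T := by
            apply div_le_div_of_nonneg_right ?_ hT.le
            linarith
          have hcf : c ≤ fFD ((ε - μ) / T) := fFD_anti hle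
          have hfpos := fFD_pos ((ε - μ) / T)
          have habs : ‖(h₁ ε - h₂ ε) * fFD ((ε - μ) / T)‖
              = |h₁ ε - h₂ ε| * fFD ((ε - μ) / T) := by
            rw [norm_mul, Real.norm_eq_abs, Real.norm_eq_abs,
              abs_of_pos hfpos]
          rw [Real.norm_eq_abs, habs, ← mul_assoc]
          have : 1 ≤ c⁻¹ * fFD ((ε - μ) / T) := by
            rw [← div_eq_inv_mul, le_div_iff₀ hc]
            simpa using hcf
          nlinarith [abs_nonneg (h₁ ε - h₂ ε), inv_pos.mpr hc]
        have hI2 : IntegrableOn (fun ε => h₁ ε - h₂ ε) (Set.Icc (μ - δ) μ) :=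
          hgc.integrableOn_Icc
        apply (hI1.union hI2).mono_set
        intro x hx
        rcases lt_or_ge x (μ - δ) with h' | h'
        · exact Or.inl h'
        · exact Or.inr ⟨h', le_of_lt hx⟩
      rw [integral_undef h1, h2, sub_zero]
    have hev : (fun T : ℝ =>
          (∫ ε : ℝ, (h₁ ε - h₂ ε) * fFD ((ε - μ) / T)) -
            ∫ ε in Set.Iio μ, (h₁ ε - h₂ ε)) =ᶠ[nhdsWithin 0 (Set.Ioi 0)]
        (fun _ => (0:ℝ)) :=
      Filter.eventually_of_mem self_mem_nhdsWithin hzero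
    exact hev.trans_isLittleO (isLittleO_zero _ _)
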